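/- arXiv:2512.18404 — 8 statements merged into one kernel-verified Lean document; each statement's English description precedes it below -/
import Mathlib

section
/- The function Z defined by Z(x) = 2√(-x)·coth(√(-x)/2) for x < 0, Z(0) = 4, and Z(x) = 2√x·cot(√x/2) for 0 < x ≤ π², is a strictly decreasing bijection from (-∞, π²] onto [0, +∞). -/
open Real Set

noncomputable def Zfun : ℝ → ℝ := fun x =>
  if x < 0 then 2 * Real.sqrt (-x) * (Real.cosh (Real.sqrt (-x) / 2) / Real.sinh (Real.sqrt (-x) / 2))
  else if x = 0 then 4
  else 2 * Real.sqrt x * Real.cot (Real.sqrt x / 2)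

noncomputable def hfun : ℝ → ℝ := fun s => s * (Real.cosh s / Real.sinh s)
noncomputable def kfun : ℝ → ℝ := fun t => t * (Real.cos t / Real.sin t)

lemma sinh_lt_self_mul_cosh {s : ℝ} (hs : 0 < s) : Real.sinh s < s * Real.cosh s := by
  have h : StrictMonoOn (fun s => s * Real.cosh s - Real.sinh s) (Set.Ici 0) := by
    apply strictMonoOn_of_deriv_pos (convex_Ici 0)
    · fun_prop
    · intro x hx
      rw [interior_Ici] at hx
      have hd : HasDerivAt (fun s => s * Real.cosh s - Real.sinh s) (x * Real.sinh x) x := by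
        have h := ((hasDerivAt_id x).mul (Real.hasDerivAt_cosh x)).sub (Real.hasDerivAt_sinh x)
        simp only [id_eq, one_mul] at h
        refine h.congr_deriv ?_; ring
      rw [hd.deriv]
      exact mul_pos hx (Real.sinh_pos_iff.2 hx)
  have := h (Set.mem_Ici.2 le_rfl) (Set.mem_Ici.2 hs.le) hs
  simpa using this

lemma hfun_hasDeriv {s : ℝ} (hs : 0 < s) :
    HasDerivAt hfun ((Real.cosh s * Real.sinh s - s) / Real.sinh s ^ 2) s := by
  have hsne : Real.sinh s ≠ 0 := (Real.sinh_pos_iff.2 hs).ne'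
  have hd := (hasDerivAt_id s).mul ((Real.hasDerivAt_cosh s).div (Real.hasDerivAt_sinh s) hsne)
  refine hd.congr_deriv ?_
  have h2 : Real.sinh s * Real.sinh s - Real.cosh s * Real.cosh s = -1 := by
    nlinarith [Real.cosh_sq_sub_sinh_sq s]
  rw [h2]
  simp only [Pi.div_apply, id_eq]
  field_simp
  ring

lemma hfun_strictMono : StrictMonoOn hfun (Set.Ioi 0) := by
  apply strictMonoOn_of_deriv_pos (convex_Ioi 0)
  · apply ContinuousOn.mul continuousOn_id
    exact Real.continuous_cosh.continuousOn.div Real.continuous_sinh.continuousOn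
      (fun x hx => (Real.sinh_pos_iff.2 hx).ne')
  · intro x hx
    rw [interior_Ioi] at hx
    rw [(hfun_hasDeriv hx).deriv]
    apply div_pos _ (pow_pos (Real.sinh_pos_iff.2 hx) 2)
    have h1 : x < Real.sinh x := Real.self_lt_sinh_iff.2 hx
    nlinarith [Real.one_le_cosh x, Real.sinh_pos_iff.2 hx]

lemma kfun_hasDeriv {t : ℝ} (ht : Real.sin t ≠ 0) :
    HasDerivAt kfun ((Real.cos t * Real.sin t - t) / Real.sin t ^ 2) t := by
  have hd := (hasDerivAt_id t).mul ((Real.hasDerivAt_cos t).div (Real.hasDerivAt_sin t) ht)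
  refine hd.congr_deriv ?_
  have h2 : -Real.sin t * Real.sin t - Real.cos t * Real.cos t = -1 := by
    nlinarith [Real.sin_sq_add_cos_sq t]
  rw [h2]
  simp only [Pi.div_apply, id_eq]
  field_simp
  ring

lemma kfun_strictAnti : StrictAntiOn kfun (Set.Ioc 0 (π / 2)) := by
  have hsin : ∀ t ∈ Set.Ioc 0 (π / 2), Real.sin t ≠ 0 := by
    intro t ht
    exact (Real.sin_pos_of_pos_of_lt_pi ht.1 (lt_of_le_of_lt ht.2 (by linarith [Real.pi_pos]))).ne'
  apply strictAntiOn_of_deriv_neg (convex_Ioc 0 (π / 2))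
  · apply ContinuousOn.mul continuousOn_id
    exact Real.continuous_cos.continuousOn.div Real.continuous_sin.continuousOn hsin
  · intro t ht
    rw [interior_Ioc] at ht
    have ht' : t ∈ Set.Ioc 0 (π / 2) := ⟨ht.1, ht.2.le⟩
    rw [(kfun_hasDeriv (hsin t ht')).deriv]
    apply div_neg_of_neg_of_pos _ (pow_pos (Real.sin_pos_of_pos_of_lt_pi ht.1
      (lt_of_lt_of_le ht.2 (by linarith [Real.pi_pos]))) 2)
    have h1 : Real.sin t < t := Real.sin_lt ht.1
    have h2 : 0 < Real.sin t := Real.sin_pos_of_pos_of_lt_pi ht.1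
      (lt_of_lt_of_le ht.2 (by linarith [Real.pi_pos]))
    nlinarith [Real.cos_le_one t]

lemma Zfun_of_neg {x : ℝ} (hx : x < 0) : Zfun x = 4 * hfun (Real.sqrt (-x) / 2) := by
  simp only [Zfun, if_pos hx, hfun]
  ring

lemma Zfun_of_pos {x : ℝ} (hx : 0 < x) : Zfun x = 4 * kfun (Real.sqrt x / 2) := by
  simp only [Zfun, if_neg (not_lt.2 hx.le), if_neg hx.ne', kfun, Real.cot_eq_cos_div_sin]
  ring

lemma Zfun_zero : Zfun 0 = 4 := by simp [Zfun]

lemma sqrt_neg_pos {x : ℝ} (hx : x < 0) : 0 < Real.sqrt (-x) / 2 :=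
  div_pos (Real.sqrt_pos.2 (by linarith)) two_pos

lemma hfun_gt_one {s : ℝ} (hs : 0 < s) : 1 < hfun s := by
  have h1 : 0 < Real.sinh s := Real.sinh_pos_iff.2 hs
  have h2 := sinh_lt_self_mul_cosh hs
  rw [hfun, mul_div_assoc']
  rw [lt_div_iff₀ h1]
  linarith

lemma hfun_le {s : ℝ} (hs : 0 < s) : hfun s ≤ 1 + s := by
  have h1 : 0 < Real.sinh s := Real.sinh_pos_iff.2 hs
  rw [hfun, mul_div_assoc', div_le_iff₀ h1]
  rw [Real.sinh_eq, Real.cosh_eq]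
  have h2 := Real.add_one_le_exp (2 * s)
  have h3 : Real.exp s * Real.exp (-s) = 1 := by rw [← Real.exp_add]; simp
  have h4 : Real.exp (2 * s) = Real.exp s * Real.exp s := by rw [← Real.exp_add]; ring_nf
  have h5 : 0 < Real.exp s := Real.exp_pos s
  have h6 : 0 < Real.exp (-s) := Real.exp_pos (-s)
  nlinarith

lemma hfun_ge_self {s : ℝ} (hs : 0 < s) : s ≤ hfun s := by
  have h1 : 0 < Real.sinh s := Real.sinh_pos_iff.2 hs
  have h2 : Real.sinh s < Real.cosh s := Real.sinh_lt_cosh s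
  have h3 : 1 ≤ Real.cosh s / Real.sinh s := (one_le_div h1).2 h2.le
  calc s = s * 1 := (mul_one s).symm
    _ ≤ s * (Real.cosh s / Real.sinh s) := mul_le_mul_of_nonneg_left h3 hs.le

lemma sin_pos_of_mem {t : ℝ} (ht : t ∈ Set.Ioc 0 (π / 2)) : 0 < Real.sin t :=
  Real.sin_pos_of_pos_of_lt_pi ht.1 (lt_of_le_of_lt ht.2 (by linarith [Real.pi_pos]))

lemma kfun_lt_one {t : ℝ} (ht : t ∈ Set.Ioc 0 (π / 2)) : kfun t < 1 := by
  have hsin := sin_pos_of_mem ht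
  rw [kfun, mul_div_assoc', div_lt_one hsin]
  rcases lt_or_eq_of_le ht.2 with h | h
  · have h1 : t < Real.tan t := Real.lt_tan ht.1 h
    have h2 : 0 < Real.cos t := Real.cos_pos_of_mem_Ioo ⟨by linarith [Real.pi_pos, ht.1], h⟩
    rw [Real.tan_eq_sin_div_cos, lt_div_iff₀ h2] at h1
    linarith
  · rw [h, Real.cos_pi_div_two]
    simpa [h] using hsin

lemma kfun_ge_cos {t : ℝ} (ht : t ∈ Set.Ioc 0 (π / 2)) : Real.cos t ≤ kfun t := by
  have hsin := sin_pos_of_mem ht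
  have hcos : 0 ≤ Real.cos t :=
    Real.cos_nonneg_of_mem_Icc ⟨by linarith [Real.pi_pos, ht.1], ht.2⟩
  have hst : Real.sin t ≤ t := (Real.sin_lt ht.1).le
  rw [kfun, mul_div_assoc', le_div_iff₀ hsin]
  nlinarith

lemma kfun_nonneg {t : ℝ} (ht : t ∈ Set.Ioc 0 (π / 2)) : 0 ≤ kfun t := by
  have hsin := sin_pos_of_mem ht
  have hcos : 0 ≤ Real.cos t :=
    Real.cos_nonneg_of_mem_Icc ⟨by linarith [Real.pi_pos, ht.1], ht.2⟩
  exact mul_nonneg ht.1.le (div_nonneg hcos hsin.le)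

lemma sqrt_mem_Ioc {x : ℝ} (hx1 : 0 < x) (hx2 : x ≤ π ^ 2) :
    Real.sqrt x / 2 ∈ Set.Ioc 0 (π / 2) := by
  constructor
  · exact div_pos (Real.sqrt_pos.2 hx1) two_pos
  · have : Real.sqrt x ≤ π := by
      calc Real.sqrt x ≤ Real.sqrt (π ^ 2) := Real.sqrt_le_sqrt hx2
        _ = π := Real.sqrt_sq Real.pi_pos.le
    linarith

lemma Zfun_neg_gt {x : ℝ} (hx : x < 0) : 4 < Zfun x := by
  rw [Zfun_of_neg hx]
  linarith [hfun_gt_one (sqrt_neg_pos hx)]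

lemma Zfun_neg_le {x : ℝ} (hx : x < 0) : Zfun x ≤ 4 + 2 * Real.sqrt (-x) := by
  rw [Zfun_of_neg hx]
  linarith [hfun_le (sqrt_neg_pos hx)]

lemma Zfun_neg_ge {x : ℝ} (hx : x < 0) : 2 * Real.sqrt (-x) ≤ Zfun x := by
  rw [Zfun_of_neg hx]
  linarith [hfun_ge_self (sqrt_neg_pos hx)]

lemma Zfun_pos_lt {x : ℝ} (hx1 : 0 < x) (hx2 : x ≤ π ^ 2) : Zfun x < 4 := by
  rw [Zfun_of_pos hx1]
  linarith [kfun_lt_one (sqrt_mem_Ioc hx1 hx2)]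

lemma Zfun_pos_nonneg {x : ℝ} (hx1 : 0 < x) (hx2 : x ≤ π ^ 2) : 0 ≤ Zfun x := by
  rw [Zfun_of_pos hx1]
  linarith [kfun_nonneg (sqrt_mem_Ioc hx1 hx2)]

lemma Zfun_pos_ge {x : ℝ} (hx1 : 0 < x) (hx2 : x ≤ π ^ 2) : 4 - x / 2 ≤ Zfun x := by
  rw [Zfun_of_pos hx1]
  have ht := sqrt_mem_Ioc hx1 hx2
  have h1 := kfun_ge_cos ht
  have h2 := Real.one_sub_sq_div_two_le_cos (x := Real.sqrt x / 2)
  have h3 : (Real.sqrt x / 2) ^ 2 = x / 4 := by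
    rw [div_pow, Real.sq_sqrt hx1.le]; norm_num
  rw [h3] at h2
  linarith

lemma Zfun_pisq : Zfun (π ^ 2) = 0 := by
  have hπ : (0:ℝ) < π ^ 2 := by positivity
  simp only [Zfun, if_neg (not_lt.2 hπ.le), if_neg hπ.ne']
  rw [Real.sqrt_sq Real.pi_pos.le, Real.cot_eq_cos_div_sin, Real.cos_pi_div_two]
  simp

lemma Zfun_strictAnti : StrictAntiOn Zfun (Set.Iic (π ^ 2)) := by
  intro a ha b hb hab
  rcases lt_trichotomy b 0 with hb0 | hb0 | hb0
  · -- both negative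
    have ha0 : a < 0 := lt_trans hab hb0
    rw [Zfun_of_neg ha0, Zfun_of_neg hb0]
    have h1 : Real.sqrt (-b) / 2 < Real.sqrt (-a) / 2 := by
      have := Real.sqrt_lt_sqrt (by linarith : (0:ℝ) ≤ -b) (by linarith : -b < -a)
      linarith
    have := hfun_strictMono (sqrt_neg_pos hb0) (sqrt_neg_pos ha0) h1
    linarith
  · subst hb0
    rw [Zfun_zero]
    exact Zfun_neg_gt hab
  · rcases lt_trichotomy a 0 with ha0 | ha0 | ha0
    · exact lt_trans (Zfun_pos_lt hb0 hb) (Zfun_neg_gt ha0)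
    · subst ha0; rw [Zfun_zero]; exact Zfun_pos_lt hb0 hb
    · rw [Zfun_of_pos ha0, Zfun_of_pos hb0]
      have h1 : Real.sqrt a / 2 < Real.sqrt b / 2 := by
        have := Real.sqrt_lt_sqrt ha0.le hab
        linarith
      have := kfun_strictAnti (sqrt_mem_Ioc ha0 ha) (sqrt_mem_Ioc hb0 hb) h1
      linarith

lemma Zfun_contOn_pos {a : ℝ} (ha : 0 < a) :
    ContinuousOn Zfun (Set.Icc a (π ^ 2)) := by
  apply ContinuousOn.congr (f := fun x =>
      2 * Real.sqrt x * (Real.cos (Real.sqrt x / 2) / Real.sin (Real.sqrt x / 2)))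
  · apply ContinuousOn.mul
    · fun_prop
    · apply ContinuousOn.div
      · fun_prop
      · fun_prop
      · intro x hx
        exact (sin_pos_of_mem (sqrt_mem_Ioc (lt_of_lt_of_le ha hx.1) hx.2)).ne'
  · intro x hx
    have hx0 : 0 < x := lt_of_lt_of_le ha hx.1
    simp only [Zfun, if_neg (not_lt.2 hx0.le), if_neg hx0.ne', Real.cot_eq_cos_div_sin]

lemma Zfun_contOn_neg {a b : ℝ} (hb : b < 0) :
    ContinuousOn Zfun (Set.Icc a b) := by
  apply ContinuousOn.congr (f := fun x =>
      2 * Real.sqrt (-x) * (Real.cosh (Real.sqrt (-x) / 2) / Real.sinh (Real.sqrt (-x) / 2)))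
  · apply ContinuousOn.mul
    · fun_prop
    · apply ContinuousOn.div
      · fun_prop
      · fun_prop
      · intro x hx
        exact (Real.sinh_pos_iff.2 (sqrt_neg_pos (lt_of_le_of_lt hx.2 hb))).ne'
  · intro x hx
    have hx0 : x < 0 := lt_of_le_of_lt hx.2 hb
    simp only [Zfun, if_pos hx0]

theorem Zfun_strictAnti_bijOn :
    StrictAntiOn Zfun (Set.Iic (π ^ 2)) ∧
    Set.BijOn Zfun (Set.Iic (π ^ 2)) (Set.Ici (0 : ℝ)) := by
  have hanti := Zfun_strictAnti
  refine ⟨hanti, ?_, hanti.injOn, ?_⟩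
  · -- MapsTo
    intro x hx
    rcases lt_trichotomy x 0 with h | h | h
    · exact le_of_lt (lt_trans (by norm_num) (Zfun_neg_gt h))
    · subst h; rw [Zfun_zero]; norm_num
    · exact Zfun_pos_nonneg h hx
  · -- SurjOn
    intro y hy
    rw [Set.mem_Ici] at hy
    rcases lt_trichotomy y 4 with h4 | h4 | h4
    · -- 0 ≤ y < 4 : use IVT on [x₀, π²] with x₀ = 2*(4 - y)
      set x₀ : ℝ := 2 * (4 - y) with hx₀def
      have hx₀pos : 0 < x₀ := by simp only [hx₀def]; linarith
      have hpi2 : (8:ℝ) < π ^ 2 := by nlinarith [Real.pi_gt_three]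
      have hx₀le : x₀ ≤ π ^ 2 := by simp only [hx₀def]; linarith
      have hcont := Zfun_contOn_pos hx₀pos
      have hmem : y ∈ Set.Icc (Zfun (π ^ 2)) (Zfun x₀) := by
        rw [Zfun_pisq]
        refine ⟨hy, ?_⟩
        have := Zfun_pos_ge hx₀pos hx₀le
        simp only [hx₀def] at this ⊢
        linarith
      obtain ⟨x, hx, hxy⟩ := intermediate_value_Icc' hx₀le hcont hmem
      exact ⟨x, Set.mem_Iic.2 hx.2, hxy⟩
    · exact ⟨0, Set.mem_Iic.2 (by positivity), by rw [Zfun_zero, h4]⟩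
    · -- y > 4 : IVT on [-y², -((y-4)/2)²]
      set b : ℝ := -(((y - 4) / 2) ^ 2) with hbdef
      set a : ℝ := -(y ^ 2) with hadef
      have hb0 : b < 0 := by simp only [hbdef]; nlinarith
      have hab : a ≤ b := by simp only [hadef, hbdef]; nlinarith
      have hcont := Zfun_contOn_neg (a := a) hb0
      have hsb : Real.sqrt (-b) = (y - 4) / 2 := by
        simp only [hbdef, neg_neg]; exact Real.sqrt_sq (by linarith)
      have hsa : Real.sqrt (-a) = y := by
        simp only [hadef, neg_neg]; exact Real.sqrt_sq (by linarith)
      have hmem : y ∈ Set.Icc (Zfun b) (Zfun a) := by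
        constructor
        · have := Zfun_neg_le hb0; rw [hsb] at this; linarith
        · have := Zfun_neg_ge (lt_of_le_of_lt hab hb0); rw [hsa] at this; linarith
      obtain ⟨x, hx, hxy⟩ := intermediate_value_Icc' hab hcont hmem
      refine ⟨x, Set.mem_Iic.2 ?_, hxy⟩
      have : x ≤ b := hx.2
      nlinarith [Real.pi_pos]
end

section
/- For positive integers m and i with 1 ≤ i ≤ m and real T ∈ (0, i/(m+1)), define W_{i,m}(T) = (2i(m-i+1)π/(1-T))·cot((m-i+1)πT/(2i(1-T))). Then W_{i,m} is a strictly decreasing bijection from (0, i/(m+1)) onto (0, +∞). -/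
open Real Set

/-- The Möbius-type map `T ↦ p * T / (1 - T)` is a strictly increasing bijection from
`Ioo 0 a` onto `Ioo 0 (π/2)` when `p * a = (π/2) * (1 - a)`. -/
lemma mobius_aux (p a : ℝ) (hp : 0 < p) (ha0 : 0 < a) (ha1 : a < 1)
    (hend : p * a = (π / 2) * (1 - a)) :
    StrictMonoOn (fun T : ℝ => p * T / (1 - T)) (Ioo 0 a) ∧
    Set.BijOn (fun T : ℝ => p * T / (1 - T)) (Ioo 0 a) (Ioo 0 (π / 2)) := by
  have hmono : StrictMonoOn (fun T : ℝ => p * T / (1 - T)) (Ioo 0 a) := by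
    intro x hx y hy hxy
    have hx1 : 0 < 1 - x := by linarith [hx.2]
    have hy1 : 0 < 1 - y := by linarith [hy.2]
    simp only
    rw [div_lt_div_iff₀ hx1 hy1]
    nlinarith [hx.1, hy.1]
  have hmaps : Set.MapsTo (fun T : ℝ => p * T / (1 - T)) (Ioo 0 a) (Ioo 0 (π / 2)) := by
    intro x hx
    have hx1 : 0 < 1 - x := by linarith [hx.2]
    constructor
    · exact div_pos (mul_pos hp hx.1) hx1
    · rw [div_lt_iff₀ hx1]
      nlinarith [hx.1, hx.2]
  refine ⟨hmono, hmaps, hmono.injOn, ?_⟩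
  intro y hy
  have hpy : 0 < p + y := by linarith [hy.1]
  refine ⟨y / (p + y), ⟨div_pos hy.1 hpy, ?_⟩, ?_⟩
  · rw [div_lt_iff₀ hpy]
    nlinarith [hy.1, hy.2]
  · have h1 : 1 - y / (p + y) = p / (p + y) := by field_simp; ring
    simp only [h1]
    have hp' : p ≠ 0 := ne_of_gt hp
    have hpy' : p + y ≠ 0 := ne_of_gt hpy
    field_simp

/-- `x ↦ c * (p + x) * cot x` is strictly decreasing on `(0, π/2)` and bijective onto
`(0, ∞)`. -/
lemma F_aux (c p : ℝ) (hc : 0 < c) (hp : 0 < p) :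
    StrictAntiOn (fun x : ℝ => c * (p + x) * Real.cot x) (Ioo 0 (π / 2)) ∧
    Set.BijOn (fun x : ℝ => c * (p + x) * Real.cot x) (Ioo 0 (π / 2)) (Ioi (0 : ℝ)) := by
  have hfun : (fun x : ℝ => c * (p + x) * Real.cot x)
      = fun x : ℝ => c * (p + x) * (Real.cos x / Real.sin x) := by
    funext x; rw [Real.cot_eq_cos_div_sin]
  rw [hfun]
  set f : ℝ → ℝ := fun x : ℝ => c * (p + x) * (Real.cos x / Real.sin x) with hf
  have hsin : ∀ x ∈ Ioo (0:ℝ) (π/2), 0 < Real.sin x := by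
    intro x hx
    exact Real.sin_pos_of_pos_of_lt_pi hx.1 (by linarith [Real.pi_pos, hx.2])
  have hcont : ∀ s : Set ℝ, (∀ x ∈ s, Real.sin x ≠ 0) → ContinuousOn f s := by
    intro s hs
    exact (continuousOn_const.mul (continuousOn_const.add continuousOn_id)).mul
      ((Real.continuous_cos.continuousOn).div (Real.continuous_sin.continuousOn) hs)
  have hanti : StrictAntiOn f (Ioo 0 (π / 2)) := by
    apply strictAntiOn_of_deriv_neg (convex_Ioo _ _)
      (hcont _ fun x hx => (hsin x hx).ne')
    intro x hx
    rw [interior_Ioo] at hx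
    have hs := hsin x hx
    have hD : HasDerivAt f
        (c * (Real.cos x / Real.sin x) + (c * (p + x)) *
          ((-Real.sin x * Real.sin x - Real.cos x * Real.cos x) / (Real.sin x) ^ 2)) x := by
      have hu : HasDerivAt (fun x : ℝ => c * (p + x)) (c * (0 + 1)) x :=
        ((hasDerivAt_const x p).add (hasDerivAt_id x)).const_mul c
      have hv : HasDerivAt (fun x : ℝ => Real.cos x / Real.sin x)
          ((-Real.sin x * Real.sin x - Real.cos x * Real.cos x) / (Real.sin x) ^ 2) x :=
        (Real.hasDerivAt_cos x).div (Real.hasDerivAt_sin x) hs.ne'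
      exact (hu.mul hv).congr_deriv (by ring)
    rw [hD.deriv]
    have hkey : Real.cos x * Real.sin x < p + x := by
      nlinarith [Real.sin_lt hx.1, Real.cos_le_one x, hs]
    have hone : -Real.sin x * Real.sin x - Real.cos x * Real.cos x = -1 := by
      nlinarith [Real.sin_sq_add_cos_sq x]
    rw [hone]
    have heq : c * (Real.cos x / Real.sin x) + (c * (p + x)) * (-1 / (Real.sin x) ^ 2)
        = c * (Real.cos x * Real.sin x - (p + x)) / Real.sin x ^ 2 := by
      field_simp
      ring
    rw [heq]
    apply div_neg_of_neg_of_pos _ (by positivity)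
    nlinarith
  have hmaps : Set.MapsTo f (Ioo 0 (π / 2)) (Ioi (0 : ℝ)) := by
    intro x hx
    have hs := hsin x hx
    have hcos : 0 < Real.cos x := Real.cos_pos_of_mem_Ioo
      ⟨by linarith [hx.1, Real.pi_pos], hx.2⟩
    have hpx : 0 < p + x := by linarith [hx.1]
    simp only [hf, mem_Ioi]
    exact mul_pos (mul_pos hc hpx) (div_pos hcos hs)
  refine ⟨hanti, hmaps, hanti.injOn, ?_⟩
  intro y hy
  simp only [mem_Ioi] at hy
  set x₀ : ℝ := min (π / 4) (c * p / (4 * y)) with hx₀def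
  have hpi : 0 < π := Real.pi_pos
  have hx₀pos : 0 < x₀ := by apply lt_min <;> positivity
  have hx₀le : x₀ ≤ π / 4 := min_le_left _ _
  have hx₀lt : x₀ < π / 2 := lt_of_le_of_lt hx₀le (by linarith)
  have hx₀mem : x₀ ∈ Ioo (0:ℝ) (π/2) := ⟨hx₀pos, hx₀lt⟩
  -- f x₀ > y
  have hfy : y < f x₀ := by
    have hs := hsin x₀ hx₀mem
    have hsinlt : Real.sin x₀ < x₀ := Real.sin_lt hx₀pos
    have hcos : Real.cos (π/4) ≤ Real.cos x₀ :=
      Real.cos_le_cos_of_nonneg_of_le_pi hx₀pos.le (by linarith) hx₀le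
    have hsqrt2 : (1:ℝ) ≤ Real.sqrt 2 := by
      nlinarith [Real.sq_sqrt (by norm_num : (0:ℝ) ≤ 2), Real.sqrt_nonneg 2]
    have hcosval : (1:ℝ)/2 ≤ Real.cos x₀ := by
      rw [Real.cos_pi_div_four] at hcos
      linarith
    have hub : x₀ ≤ c * p / (4 * y) := min_le_right _ _
    have hcot : 1 / (2 * x₀) ≤ Real.cos x₀ / Real.sin x₀ := by
      rw [div_le_div_iff₀ (by positivity) hs]
      nlinarith
    have h1 : c * p / (2 * x₀) ≤ c * (p + x₀) * (Real.cos x₀ / Real.sin x₀) := by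
      have : c * p * (1 / (2 * x₀)) ≤ c * (p + x₀) * (Real.cos x₀ / Real.sin x₀) := by
        apply mul_le_mul (by nlinarith) hcot (by positivity) (by positivity)
      calc c * p / (2 * x₀) = c * p * (1 / (2 * x₀)) := by ring
        _ ≤ _ := this
    have hub' : x₀ * (4 * y) ≤ c * p := (le_div_iff₀ (by positivity)).mp hub
    have h2 : y < c * p / (2 * x₀) := by
      rw [lt_div_iff₀ (by positivity)]
      nlinarith [hub', hx₀pos, hy, hc, hp]
    exact lt_of_lt_of_le h2 h1
  have hfhalf : f (π / 2) = 0 := by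
    simp [hf, Real.cos_pi_div_two]
  have hivt := intermediate_value_Ioo' (le_of_lt hx₀lt)
    (hcont (Icc x₀ (π/2)) (fun x hx =>
      (Real.sin_pos_of_pos_of_lt_pi (lt_of_lt_of_le hx₀pos hx.1)
        (by linarith [hx.2])).ne'))
  have hymem : y ∈ Ioo (f (π/2)) (f x₀) := by rw [hfhalf]; exact ⟨hy, hfy⟩
  obtain ⟨z, hz, hfz⟩ := hivt hymem
  exact ⟨z, ⟨lt_trans hx₀pos hz.1, hz.2⟩, hfz⟩

theorem W_strictAnti_bijOn (m i : ℕ) (hi1 : 1 ≤ i) (him : i ≤ m) :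
    StrictAntiOn
      (fun T : ℝ => (2 * i * ((m : ℝ) - i + 1) * π / (1 - T)) *
        Real.cot (((m : ℝ) - i + 1) * π * T / (2 * i * (1 - T))))
      (Set.Ioo 0 ((i : ℝ) / (m + 1))) ∧
    Set.BijOn
      (fun T : ℝ => (2 * i * ((m : ℝ) - i + 1) * π / (1 - T)) *
        Real.cot (((m : ℝ) - i + 1) * π * T / (2 * i * (1 - T))))
      (Set.Ioo 0 ((i : ℝ) / (m + 1))) (Set.Ioi (0 : ℝ)) := by
  have hiR : (1:ℝ) ≤ (i:ℝ) := by exact_mod_cast hi1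
  have hiR0 : (0:ℝ) < (i:ℝ) := by linarith
  have hmiR : (i:ℝ) ≤ (m:ℝ) := by exact_mod_cast him
  have hq : (1:ℝ) ≤ (m:ℝ) - i + 1 := by linarith
  have hq0 : (0:ℝ) < (m:ℝ) - i + 1 := by linarith
  have hpi : 0 < π := Real.pi_pos
  set p : ℝ := ((m:ℝ) - i + 1) * π / (2 * i) with hpdef
  set a : ℝ := (i:ℝ) / (m + 1) with hadef
  have hp : 0 < p := by positivity
  have hm1 : (0:ℝ) < (m:ℝ) + 1 := by linarith
  have ha0 : 0 < a := by positivity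
  have ha1 : a < 1 := by
    rw [hadef, div_lt_one hm1]; linarith
  have hend : p * a = (π / 2) * (1 - a) := by
    rw [hpdef, hadef]
    field_simp
    ring
  obtain ⟨gmono, gbij⟩ := mobius_aux p a hp ha0 ha1 hend
  obtain ⟨Fanti, Fbij⟩ := F_aux (4 * (i:ℝ)^2) p (by positivity) hp
  set g : ℝ → ℝ := fun T => p * T / (1 - T) with hgdef
  set F : ℝ → ℝ := fun x => 4 * (i:ℝ)^2 * (p + x) * Real.cot x with hFdef
  have heq : Set.EqOn
      (fun T : ℝ => (2 * i * ((m : ℝ) - i + 1) * π / (1 - T)) *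
        Real.cot (((m : ℝ) - i + 1) * π * T / (2 * i * (1 - T))))
      (F ∘ g) (Set.Ioo 0 a) := by
    intro T hT
    have hT1 : 0 < 1 - T := by
      have := hT.2; rw [hadef] at this
      have : T < 1 := lt_trans this ha1
      linarith
    have harg : ((m : ℝ) - i + 1) * π * T / (2 * i * (1 - T)) = g T := by
      rw [hgdef, hpdef]
      field_simp
    have hcoef : (2 * i * ((m : ℝ) - i + 1) * π / (1 - T)) = 4 * (i:ℝ)^2 * (p + g T) := by
      rw [hgdef, hpdef]
      field_simp
      ring
    simp only [Function.comp_apply, hFdef, harg, hcoef]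
  constructor
  · intro x hx y hy hxy
    rw [heq hx, heq hy]
    exact Fanti (gbij.mapsTo hx) (gbij.mapsTo hy) (gmono hx hy hxy)
  · exact (Fbij.comp gbij).congr fun x hx => (heq hx).symm
end

section
/- For any constant π̃ > 0, the function H(t) = (t + cot t + π̃)² - (2t + t·cot²t)² is strictly decreasing on (0, π/2); in particular H'(t) < 0 for all t ∈ (0, π/2). -/
open Real Set

/-- Helper: if `f' ≥ 0` on `(0, π/2)`, then `f 0 ≤ f` on `[0, π/2]`. -/
lemma mono_help {f f' : ℝ → ℝ} (hd : ∀ x, HasDerivAt f (f' x) x)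
    (h0 : ∀ x ∈ Ioo (0:ℝ) (π/2), 0 ≤ f' x) :
    ∀ t ∈ Icc (0:ℝ) (π/2), f 0 ≤ f t := by
  intro t ht
  have hmono : MonotoneOn f (Icc (0:ℝ) (π/2)) := by
    apply monotoneOn_of_hasDerivWithinAt_nonneg (convex_Icc _ _)
      (fun x _ => (hd x).differentiableAt.continuousAt.continuousWithinAt)
      (fun x _ => (hd x).hasDerivWithinAt)
    rw [interior_Icc]
    exact h0
  exact hmono ⟨le_refl 0, pi_div_two_pos.le⟩ ht ht.1

lemma aux1 : ∀ t ∈ Icc (0:ℝ) (π/2), t * Real.cos t ≤ Real.sin t := by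
  have h := mono_help (f := fun t => Real.sin t - t * Real.cos t)
      (f' := fun t => t * Real.sin t) ?_ ?_
  · intro t ht
    have := h t ht
    simp at this
    linarith
  · intro x
    have h1 := (Real.hasDerivAt_sin x).sub ((hasDerivAt_id x).mul (Real.hasDerivAt_cos x))
    refine h1.congr_deriv ?_
    simp
  · intro x hx
    have hs : 0 ≤ Real.sin x := Real.sin_nonneg_of_nonneg_of_le_pi hx.1.le
      (le_trans hx.2.le (by linarith [pi_pos]))
    exact mul_nonneg hx.1.le hs

lemma aux2 : ∀ t ∈ Icc (0:ℝ) (π/2),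
    t^3/3 * Real.cos t ≤ Real.sin t - t * Real.cos t := by
  have h := mono_help (f := fun t => Real.sin t - t * Real.cos t - t^3/3 * Real.cos t)
      (f' := fun t => t * (Real.sin t - t * Real.cos t) + t^3/3 * Real.sin t) ?_ ?_
  · intro t ht
    have := h t ht
    simp at this
    linarith
  · intro x
    have h1 := ((Real.hasDerivAt_sin x).sub ((hasDerivAt_id x).mul (Real.hasDerivAt_cos x))).sub
      ((((hasDerivAt_pow 3 x).div_const 3)).mul (Real.hasDerivAt_cos x))
    refine h1.congr_deriv ?_
    simp
    ring
  · intro x hx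
    have hs : 0 ≤ Real.sin x := Real.sin_nonneg_of_nonneg_of_le_pi hx.1.le
      (le_trans hx.2.le (by linarith [pi_pos]))
    have h1 := aux1 x ⟨hx.1.le, hx.2.le⟩
    have ht : 0 ≤ x := hx.1.le
    have : 0 ≤ x^3/3 := by positivity
    nlinarith

lemma aux3 : ∀ t ∈ Icc (0:ℝ) (π/2),
    t - Real.sin t * Real.cos t ≤ 2/3 * t^3 := by
  have h := mono_help (f := fun t => 2/3 * t^3 - t + Real.sin t * Real.cos t)
      (f' := fun t => 2 * t^2 - 1 + (Real.cos t^2 - Real.sin t^2)) ?_ ?_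
  · intro t ht
    have := h t ht
    simp at this
    linarith
  · intro x
    have h1 := ((((hasDerivAt_pow 3 x).const_mul (2/3:ℝ)).sub (hasDerivAt_id x)).add
      ((Real.hasDerivAt_sin x).mul (Real.hasDerivAt_cos x)))
    refine h1.congr_deriv ?_
    simp
    ring
  · intro x hx
    have hs : 0 ≤ Real.sin x := Real.sin_nonneg_of_nonneg_of_le_pi hx.1.le
      (le_trans hx.2.le (by linarith [pi_pos]))
    have hsx : Real.sin x ≤ x := Real.sin_le hx.1.le
    have hp := Real.sin_sq_add_cos_sq x
    have h2 : Real.sin x ^ 2 ≤ x ^ 2 := pow_le_pow_left₀ hs hsx 2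
    nlinarith

/-- The derivative of `H`. -/
noncomputable def Dfun (pit t : ℝ) : ℝ :=
  2 * (t + Real.cos t / Real.sin t + pit) * (1 + (-1 / Real.sin t ^ 2)) -
  2 * (2 * t + t * (Real.cos t / Real.sin t) ^ 2) *
    (2 + ((Real.cos t / Real.sin t) ^ 2 +
      t * (2 * (Real.cos t / Real.sin t) * (-1 / Real.sin t ^ 2))))

lemma hasDerivH (pit : ℝ) {t : ℝ} (ht : t ∈ Ioo (0:ℝ) (π/2)) :
    HasDerivAt (fun t : ℝ => (t + Real.cot t + pit) ^ 2 - (2 * t + t * Real.cot t ^ 2) ^ 2)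
      (Dfun pit t) t := by
  have hs : Real.sin t ≠ 0 := by
    have : 0 < Real.sin t := Real.sin_pos_of_pos_of_lt_pi ht.1 (by linarith [ht.2, pi_pos])
    exact this.ne'
  have hfeq : (fun t : ℝ => (t + Real.cot t + pit) ^ 2 - (2 * t + t * Real.cot t ^ 2) ^ 2)
      = fun t : ℝ => (t + Real.cos t / Real.sin t + pit) ^ 2
          - (2 * t + t * (Real.cos t / Real.sin t) ^ 2) ^ 2 := by
    funext x
    rw [Real.cot_eq_cos_div_sin]
  rw [hfeq]
  have hc1 : HasDerivAt (fun x : ℝ => Real.cos x / Real.sin x) (-1 / Real.sin t ^ 2) t := by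
    have h := (Real.hasDerivAt_cos t).div (Real.hasDerivAt_sin t) hs
    refine h.congr_deriv ?_
    have := Real.sin_sq_add_cos_sq t
    congr 1
    nlinarith
  have h1 : HasDerivAt (fun x : ℝ => x + Real.cos x / Real.sin x + pit)
      (1 + (-1 / Real.sin t ^ 2)) t := ((hasDerivAt_id t).add hc1).add_const pit
  have h2 : HasDerivAt (fun x : ℝ => 2 * x + x * (Real.cos x / Real.sin x) ^ 2)
      (2 + ((Real.cos t / Real.sin t) ^ 2 +
        t * (2 * (Real.cos t / Real.sin t) * (-1 / Real.sin t ^ 2)))) t := by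
    have ha := ((hasDerivAt_id t).const_mul (2:ℝ)).add
      ((hasDerivAt_id t).mul (hc1.pow 2))
    refine ha.congr_deriv ?_
    simp only [id, Pi.pow_apply]
    push_cast
    ring
  have := (h1.pow 2).sub (h2.pow 2)
  refine this.congr_deriv ?_
  unfold Dfun
  push_cast
  ring

lemma Dfun_eq (pit t : ℝ) (hs : 0 < Real.sin t) :
    Dfun pit t = (-2*(pit*Real.sin t^3*Real.cos t^2 + t*Real.sin t*(Real.sin t^2+1)^2
      - 2*t^2*Real.cos t*(Real.sin t^2+1) + t*Real.sin t^3*Real.cos t^2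
      + Real.sin t^2*Real.cos t^3)) / Real.sin t^5 := by
  have hp : Real.sin t^2 + Real.cos t^2 = 1 := Real.sin_sq_add_cos_sq t
  have hs' : Real.sin t ≠ 0 := hs.ne'
  unfold Dfun
  field_simp
  linear_combination (pit*Real.sin t^3 + Real.cos t*Real.sin t^2 + 2*t^2*Real.cos t
    + t*Real.sin t*(-2*Real.sin t^2 - Real.cos t^2 - 1)) * hp

lemma Fpos (pit t s c : ℝ) (hpit : 0 < pit) (ht : 0 < t) (hs : 0 < s) (hc : 0 < c)
    (hc1 : c ≤ 1) (hpyth : s^2 + c^2 = 1)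
    (h2 : t^3/3 * c ≤ s - t * c) (h3 : t - s * c ≤ 2/3 * t^3) (hst : s ≤ t) :
    0 < pit*s^3*c^2 + t*s*(s^2+1)^2 - 2*t^2*c*(s^2+1) + t*s^3*c^2 + s^2*c^3 := by
  have e0 : pit*s^3*c^2 + t*s*(s^2+1)^2 - 2*t^2*c*(s^2+1) + t*s^3*c^2 + s^2*c^3
      = pit*s^3*c^2 + 2*t*(s - t*c)*(s^2+1) - c^2*s*(t - s*c) := by
    linear_combination t*s*(s^2+1)*hpyth
  rw [e0]
  have hA := mul_le_mul_of_nonneg_left h2 (show (0:ℝ) ≤ 2*t*(s^2+1) by positivity)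
  have hB := mul_le_mul_of_nonneg_left h3 (show (0:ℝ) ≤ c^2*s by positivity)
  have key : s*c ≤ t*(s^2+1) := by
    nlinarith [mul_nonneg hs.le (sub_nonneg.2 hc1), mul_nonneg ht.le (sq_nonneg s)]
  have hC := mul_le_mul_of_nonneg_left key (show (0:ℝ) ≤ 2/3*t^3*c by positivity)
  nlinarith [mul_pos (mul_pos hpit (pow_pos hs 3)) (pow_pos hc 2)]

theorem H_strictAnti (pit : ℝ) (hpit : 0 < pit) :
    StrictAntiOn
      (fun t : ℝ => (t + Real.cot t + pit) ^ 2 - (2 * t + t * Real.cot t ^ 2) ^ 2)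
      (Set.Ioo 0 (π / 2)) ∧
    ∀ t ∈ Set.Ioo (0 : ℝ) (π / 2),
      deriv (fun t : ℝ => (t + Real.cot t + pit) ^ 2 - (2 * t + t * Real.cot t ^ 2) ^ 2) t < 0 := by
  have hderiv : ∀ t ∈ Set.Ioo (0:ℝ) (π/2),
      deriv (fun t : ℝ => (t + Real.cot t + pit) ^ 2 - (2 * t + t * Real.cot t ^ 2) ^ 2) t < 0 := by
    intro t ht
    have hH := hasDerivH pit ht
    rw [hH.deriv]
    have hs : 0 < Real.sin t := Real.sin_pos_of_pos_of_lt_pi ht.1 (by linarith [ht.2, pi_pos])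
    have hc : 0 < Real.cos t := Real.cos_pos_of_mem_Ioo ⟨by linarith [ht.1, pi_pos], ht.2⟩
    have hticc : t ∈ Icc (0:ℝ) (π/2) := ⟨ht.1.le, ht.2.le⟩
    have h2 := aux2 t hticc
    have h3 := aux3 t hticc
    have hst := Real.sin_le ht.1.le
    have hc1 := Real.cos_le_one t
    have hF := Fpos pit t (Real.sin t) (Real.cos t) hpit ht.1 hs hc hc1
      (Real.sin_sq_add_cos_sq t) h2 h3 hst
    rw [Dfun_eq pit t hs]
    apply div_neg_of_neg_of_pos (by linarith) (by positivity)
  refine ⟨?_, hderiv⟩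
  apply strictAntiOn_of_deriv_neg (convex_Ioo _ _)
    (fun x hx => (hasDerivH pit hx).differentiableAt.continuousAt.continuousWithinAt)
  rw [interior_Ioo]
  exact hderiv
end

section
/- For any constant π̃ ∈ ℝ, the function g(t) = -cot t + 2t²·cot t/sin²t - t/sin²t + π̃ has derivative g'(t) = (t/sin⁴t)·(3·sin(2t) - 2t - 4t·cos²t), which is negative for all t ∈ (0, π/2); hence g is strictly decreasing on (0, π/2). -/
open Real Set

private lemma aux1_s8 {u : ℝ} (hu : u ∈ Set.Ioo (0 : ℝ) π) : u * Real.cos u - Real.sin u < 0 := by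
  obtain ⟨h0, hπ⟩ := hu
  rcases lt_or_ge u (π / 2) with h | h
  · have hc : 0 < Real.cos u := Real.cos_pos_of_mem_Ioo ⟨by linarith [Real.pi_pos], h⟩
    have ht := Real.lt_tan h0 h
    rw [Real.tan_eq_sin_div_cos] at ht
    have := (lt_div_iff₀ hc).mp ht
    linarith
  · have hc : Real.cos u ≤ 0 := Real.cos_nonpos_of_pi_div_two_le_of_le h (by linarith [Real.pi_pos])
    have hs : 0 < Real.sin u := Real.sin_pos_of_pos_of_lt_pi h0 hπ
    nlinarith

private lemma aux2_s8 {u : ℝ} (hu : u ∈ Set.Ioo (0 : ℝ) π) :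
    2 * Real.cos u - 2 + u * Real.sin u < 0 := by
  have hanti : StrictAntiOn (fun x : ℝ => 2 * Real.cos x - 2 + x * Real.sin x) (Set.Icc 0 π) := by
    apply strictAntiOn_of_deriv_neg (convex_Icc 0 π)
    · fun_prop
    · intro x hx
      rw [interior_Icc] at hx
      have hd : HasDerivAt (fun x : ℝ => 2 * Real.cos x - 2 + x * Real.sin x)
          (x * Real.cos x - Real.sin x) x := by
        have := (((Real.hasDerivAt_cos x).const_mul 2).sub_const 2).add
          ((hasDerivAt_id x).mul (Real.hasDerivAt_sin x))
        exact this.congr_deriv (by simp [id]; try ring)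
      rw [hd.deriv]
      exact aux1_s8 hx
  have := hanti (Set.left_mem_Icc.mpr (le_of_lt (lt_trans hu.1 hu.2)))
    ⟨le_of_lt hu.1, le_of_lt hu.2⟩ hu.1
  simpa using this

private lemma aux3_s8 {u : ℝ} (hu : u ∈ Set.Ioo (0 : ℝ) π) :
    3 * Real.sin u - 2 * u - u * Real.cos u < 0 := by
  have hanti : StrictAntiOn (fun x : ℝ => 3 * Real.sin x - 2 * x - x * Real.cos x)
      (Set.Icc 0 π) := by
    apply strictAntiOn_of_deriv_neg (convex_Icc 0 π)
    · fun_prop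
    · intro x hx
      rw [interior_Icc] at hx
      have hd : HasDerivAt (fun x : ℝ => 3 * Real.sin x - 2 * x - x * Real.cos x)
          (2 * Real.cos x - 2 + x * Real.sin x) x := by
        have := (((Real.hasDerivAt_sin x).const_mul 3).sub ((hasDerivAt_id x).const_mul 2)).sub
          ((hasDerivAt_id x).mul (Real.hasDerivAt_cos x))
        exact this.congr_deriv (by simp [id]; try ring)
      rw [hd.deriv]
      exact aux2_s8 hx
  have := hanti (Set.left_mem_Icc.mpr (le_of_lt (lt_trans hu.1 hu.2)))
    ⟨le_of_lt hu.1, le_of_lt hu.2⟩ hu.1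
  simpa using this

theorem g_deriv_neg (pit : ℝ) :
    (∀ t ∈ Set.Ioo (0 : ℝ) (π / 2),
      HasDerivAt
        (fun t : ℝ => -Real.cot t + 2 * t ^ 2 * Real.cot t / Real.sin t ^ 2
          - t / Real.sin t ^ 2 + pit)
        (t / Real.sin t ^ 4 * (3 * Real.sin (2 * t) - 2 * t - 4 * t * Real.cos t ^ 2)) t ∧
      t / Real.sin t ^ 4 * (3 * Real.sin (2 * t) - 2 * t - 4 * t * Real.cos t ^ 2) < 0) ∧
    StrictAntiOn
      (fun t : ℝ => -Real.cot t + 2 * t ^ 2 * Real.cot t / Real.sin t ^ 2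
        - t / Real.sin t ^ 2 + pit)
      (Set.Ioo 0 (π / 2)) := by
  have main : ∀ t ∈ Set.Ioo (0 : ℝ) (π / 2),
      HasDerivAt
        (fun t : ℝ => -Real.cot t + 2 * t ^ 2 * Real.cot t / Real.sin t ^ 2
          - t / Real.sin t ^ 2 + pit)
        (t / Real.sin t ^ 4 * (3 * Real.sin (2 * t) - 2 * t - 4 * t * Real.cos t ^ 2)) t ∧
      t / Real.sin t ^ 4 * (3 * Real.sin (2 * t) - 2 * t - 4 * t * Real.cos t ^ 2) < 0 := by
    intro t ht
    obtain ⟨h0, hπ2⟩ := ht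
    have hπ : t < π := lt_trans hπ2 (by linarith [Real.pi_pos])
    have hs : 0 < Real.sin t := Real.sin_pos_of_pos_of_lt_pi h0 hπ
    have hs' : Real.sin t ≠ 0 := ne_of_gt hs
    have hpy := Real.sin_sq_add_cos_sq t
    constructor
    · simp only [Real.cot_eq_cos_div_sin]
      -- build derivative via combinators
      have h1 : HasDerivAt (fun x : ℝ => Real.cos x / Real.sin x)
          ((-Real.sin t * Real.sin t - Real.cos t * Real.cos t) / Real.sin t ^ 2) t :=
        (Real.hasDerivAt_cos t).div (Real.hasDerivAt_sin t) hs'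
      have h2 : HasDerivAt (fun x : ℝ => 2 * x ^ 2 * (Real.cos x / Real.sin x))
          (2 * (2 * t) * (Real.cos t / Real.sin t) +
            2 * t ^ 2 * ((-Real.sin t * Real.sin t - Real.cos t * Real.cos t) / Real.sin t ^ 2))
          t := by
        have hA : HasDerivAt (fun x : ℝ => 2 * x ^ 2) (2 * (2 * t)) t := by
          simpa using (hasDerivAt_pow 2 t).const_mul 2
        exact hA.mul h1
      have hsq : HasDerivAt (fun x : ℝ => Real.sin x ^ 2) (2 * Real.sin t * Real.cos t) t := by
        have := (Real.hasDerivAt_sin t).pow 2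
        exact this.congr_deriv (by simp [id]; try ring)
      have hsq' : Real.sin t ^ 2 ≠ 0 := pow_ne_zero 2 hs'
      have h3 := h2.div hsq hsq'
      have h4 : HasDerivAt (fun x : ℝ => x / Real.sin x ^ 2)
          ((1 * Real.sin t ^ 2 - t * (2 * Real.sin t * Real.cos t)) / (Real.sin t ^ 2) ^ 2) t :=
        (hasDerivAt_id t).div hsq hsq'
      have hfull := ((h1.neg.add h3).sub h4).add_const pit
      refine hfull.congr_deriv ?_
      symm
      rw [Real.sin_two_mul]
      field_simp
      linear_combination (2 * t ^ 2 - Real.sin t ^ 2) * hpy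
    · have hneg : 3 * Real.sin (2 * t) - 2 * t - 4 * t * Real.cos t ^ 2 < 0 := by
        have h2t : (2 * t) ∈ Set.Ioo (0 : ℝ) π := ⟨by linarith, by linarith⟩
        have := aux3_s8 h2t
        rw [Real.cos_two_mul] at this
        linarith
      have hpos : 0 < t / Real.sin t ^ 4 := div_pos h0 (by positivity)
      exact mul_neg_of_pos_of_neg hpos hneg
  refine ⟨main, ?_⟩
  apply strictAntiOn_of_deriv_neg (convex_Ioo 0 (π / 2))
  · intro x hx
    exact ((main x hx).1.differentiableAt.continuousAt).continuousWithinAt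
  · intro x hx
    rw [interior_Ioo] at hx
    rw [(main x hx).1.deriv]
    exact (main x hx).2
end

section
/- For all t ∈ (0, π/2), 3·sin(2t) - 2t - 4t·cos²t < 0. -/
open Real

private lemma aux_sincos (x : ℝ) (hx : x ∈ Set.Ioo 0 π) : x * Real.cos x < Real.sin x := by
  obtain ⟨h0, hπ⟩ := hx
  have hs : 0 < Real.sin x := Real.sin_pos_of_pos_of_lt_pi h0 hπ
  rcases le_or_gt (Real.cos x) 0 with hc | hc
  · nlinarith
  · have hx2 : x < π / 2 := by
      by_contra h
      push_neg at h
      have : Real.cos x ≤ 0 := Real.cos_nonpos_of_pi_div_two_le_of_le h (by linarith [Real.pi_pos])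
      linarith
    have := Real.lt_tan h0 hx2
    rw [Real.tan_eq_sin_div_cos] at this
    calc x * Real.cos x < (Real.sin x / Real.cos x) * Real.cos x := by
          exact mul_lt_mul_of_pos_right this hc
      _ = Real.sin x := by field_simp

private lemma aux_g (x : ℝ) (hx : x ∈ Set.Ioo 0 π) :
    0 < 2 - 2 * Real.cos x - x * Real.sin x := by
  set g : ℝ → ℝ := fun x => 2 - 2 * Real.cos x - x * Real.sin x with hg
  have hderiv : ∀ y : ℝ, HasDerivAt g (Real.sin y - y * Real.cos y) y := by
    intro y
    have h1 : HasDerivAt (fun y : ℝ => 2 - 2 * Real.cos y) (2 * Real.sin y) y := by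
      simpa using ((Real.hasDerivAt_cos y).const_mul (2:ℝ)).const_sub 2
    have h2 : HasDerivAt (fun y : ℝ => y * Real.sin y) (Real.sin y + y * Real.cos y) y := by
      exact ((hasDerivAt_id' y).mul (Real.hasDerivAt_sin y)).congr_deriv (by ring)
    have := h1.sub h2
    exact this.congr_deriv (by ring)
  have hmono : StrictMonoOn g (Set.Icc 0 π) := by
    apply strictMonoOn_of_deriv_pos (convex_Icc 0 π)
    · exact Continuous.continuousOn (by continuity)
    · intro y hy
      rw [interior_Icc] at hy
      rw [(hderiv y).deriv]
      have := aux_sincos y hy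
      linarith
  have h0 : g 0 = 0 := by simp [hg]
  have := hmono (Set.left_mem_Icc.2 (le_of_lt Real.pi_pos))
    ⟨le_of_lt hx.1, le_of_lt hx.2⟩ hx.1
  rw [h0] at this
  exact this

private lemma cusa (x : ℝ) (hx : x ∈ Set.Ioo 0 π) :
    3 * Real.sin x < x * (2 + Real.cos x) := by
  set f : ℝ → ℝ := fun x => x * (2 + Real.cos x) - 3 * Real.sin x with hf
  have hderiv : ∀ y : ℝ, HasDerivAt f (2 - 2 * Real.cos y - y * Real.sin y) y := by
    intro y
    have h1 : HasDerivAt (fun y : ℝ => y * (2 + Real.cos y))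
        (1 * (2 + Real.cos y) + y * (-Real.sin y)) y :=
      (hasDerivAt_id y).mul ((Real.hasDerivAt_cos y).const_add 2)
    have h2 : HasDerivAt (fun y : ℝ => 3 * Real.sin y) (3 * Real.cos y) y :=
      (Real.hasDerivAt_sin y).const_mul 3
    have := h1.sub h2
    exact this.congr_deriv (by ring)
  have hmono : StrictMonoOn f (Set.Icc 0 π) := by
    apply strictMonoOn_of_deriv_pos (convex_Icc 0 π)
    · exact Continuous.continuousOn (by continuity)
    · intro y hy
      rw [interior_Icc] at hy
      rw [(hderiv y).deriv]
      exact aux_g y hy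
  have h0 : f 0 = 0 := by simp [hf]
  have := hmono (Set.left_mem_Icc.2 (le_of_lt Real.pi_pos))
    ⟨le_of_lt hx.1, le_of_lt hx.2⟩ hx.1
  rw [h0] at this
  simp only [hf] at this
  linarith

theorem sin_ineq (t : ℝ) (ht : t ∈ Set.Ioo 0 (π / 2)) :
    3 * Real.sin (2 * t) - 2 * t - 4 * t * Real.cos t ^ 2 < 0 := by
  have h := cusa (2 * t) ⟨by linarith [ht.1], by linarith [ht.2]⟩
  rw [Real.cos_two_mul] at h
  nlinarith [h]
end

section
/- For all t ∈ (0, π/2), the inequality -(1/2)·sin(2t) - t + 2t²·cot t < 0 holds. -/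
open Real

lemma sin_gt_cubic {x : ℝ} (hx : 0 < x) : x - x ^ 3 / 6 < Real.sin x := by
  have hmono : StrictMonoOn (fun y : ℝ => Real.sin y - y + y ^ 3 / 6) (Set.Ici 0) := by
    apply strictMonoOn_of_deriv_pos (convex_Ici 0)
    · fun_prop
    · intro y hy
      rw [interior_Ici] at hy
      have hd : HasDerivAt (fun y : ℝ => Real.sin y - y + y ^ 3 / 6)
          (Real.cos y - 1 + (3 * y ^ 2) / 6) y := by
        have := ((Real.hasDerivAt_sin y).sub (hasDerivAt_id y)).add
          ((hasDerivAt_pow 3 y).div_const 6)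
        refine this.congr_deriv ?_
        norm_num
      rw [hd.deriv]
      have := Real.one_sub_sq_div_two_lt_cos (x := y) (ne_of_gt hy)
      nlinarith
  have := hmono (Set.mem_Ici.mpr le_rfl) (Set.mem_Ici.mpr hx.le) hx
  simp only [Real.sin_zero] at this
  linarith

lemma cos_lt_quartic {x : ℝ} (hx : 0 < x) :
    Real.cos x < 1 - x ^ 2 / 2 + x ^ 4 / 24 := by
  have hmono : StrictMonoOn (fun y : ℝ => 1 - y ^ 2 / 2 + y ^ 4 / 24 - Real.cos y)
      (Set.Ici 0) := by
    apply strictMonoOn_of_deriv_pos (convex_Ici 0)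
    · fun_prop
    · intro y hy
      rw [interior_Ici] at hy
      have hd : HasDerivAt (fun y : ℝ => 1 - y ^ 2 / 2 + y ^ 4 / 24 - Real.cos y)
          (0 - (2 * y) / 2 + (4 * y ^ 3) / 24 - (-Real.sin y)) y := by
        have := (((hasDerivAt_const y (1:ℝ)).sub ((hasDerivAt_pow 2 y).div_const 2)).add
          ((hasDerivAt_pow 4 y).div_const 24)).sub (Real.hasDerivAt_cos y)
        refine this.congr_deriv ?_
        norm_num
      rw [hd.deriv]
      have := sin_gt_cubic hy
      nlinarith
  have := hmono (Set.mem_Ici.mpr le_rfl) (Set.mem_Ici.mpr hx.le) hx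
  simpa using this

theorem sin_cot_ineq (t : ℝ) (ht : t ∈ Set.Ioo 0 (π / 2)) :
    -(1 / 2) * Real.sin (2 * t) - t + 2 * t ^ 2 * Real.cot t < 0 := by
  obtain ⟨ht0, ht2⟩ := ht
  have hs0 : 0 < Real.sin t := Real.sin_pos_of_pos_of_lt_pi ht0 (by linarith [Real.pi_gt_three])
  have hc0 : 0 < Real.cos t := Real.cos_pos_of_mem_Ioo ⟨by linarith, ht2⟩
  have hslt : Real.sin t < t := Real.sin_lt ht0
  have hsgt : t - t ^ 3 / 6 < Real.sin t := sin_gt_cubic ht0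
  have hclt : Real.cos t < 1 - t ^ 2 / 2 + t ^ 4 / 24 := cos_lt_quartic ht0
  have htb : t < 1.575 := by
    have := Real.pi_lt_d2
    linarith
  have key : 0 < t * Real.sin t + Real.sin t ^ 2 * Real.cos t - 2 * t ^ 2 * Real.cos t := by
    have hneg : Real.sin t ^ 2 - 2 * t ^ 2 ≤ 0 := by nlinarith
    have h1 : (Real.sin t ^ 2 - 2 * t ^ 2) * (1 - t ^ 2 / 2 + t ^ 4 / 24)
        ≤ (Real.sin t ^ 2 - 2 * t ^ 2) * Real.cos t :=
      mul_le_mul_of_nonpos_left hclt.le hneg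
    have hu : t ^ 2 < 2.481 := by nlinarith
    have hU : 0 < 1 - t ^ 2 / 2 + t ^ 4 / 24 := by nlinarith [sq_nonneg (t ^ 2 - 2.481)]
    have hq : (0:ℝ) < 11 / 72 - t ^ 2 / 36 := by linarith
    have h2 : 0 < t * (t - t ^ 3 / 6)
        + ((t - t ^ 3 / 6) ^ 2 - 2 * t ^ 2) * (1 - t ^ 2 / 2 + t ^ 4 / 24) := by
      nlinarith [mul_pos (pow_pos ht0 6) hq, pow_pos ht0 10]
    have hs0pos : 0 < t - t ^ 3 / 6 := by nlinarith
    have h3 : 0 < (Real.sin t - (t - t ^ 3 / 6))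
        * (t + (1 - t ^ 2 / 2 + t ^ 4 / 24) * (Real.sin t + (t - t ^ 3 / 6))) := by
      apply mul_pos (by linarith)
      have : 0 < Real.sin t + (t - t ^ 3 / 6) := by linarith
      nlinarith
    nlinarith [h1, h2, h3]
  rw [Real.cot_eq_cos_div_sin, Real.sin_two_mul]
  have heq : -(1 / 2) * (2 * Real.sin t * Real.cos t) - t + 2 * t ^ 2 * (Real.cos t / Real.sin t)
      = -((t * Real.sin t + Real.sin t ^ 2 * Real.cos t - 2 * t ^ 2 * Real.cos t) / Real.sin t) := by
    field_simp
    ring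
  rw [heq]
  exact neg_neg_of_pos (div_pos key hs0)
end

section
/- Let r > 0, i² > 0, π̃ > 0 and t ∈ (0, π/2]. If r̂ and T satisfy T·r̂ = 4i²·t·cot t and T = 2t/(t + π̃ + √((t+π̃)² + (r - r̂)/i²)), then r̂ = 2i²·cot t·(t - cot t + π̃ + √((t - cot t + π̃)² + r/i²)). -/
open Real

theorem rhat_formula (r i pit t rhat T : ℝ)
    (hr : 0 < r) (hi : 0 < i) (hpit : 0 < pit)
    (ht : t ∈ Set.Ioc 0 (π / 2))
    (hrhat : rhat ∈ Set.Icc 0 r) (hT : T ∈ Set.Ioo (0 : ℝ) 1)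
    (h1 : T * rhat = 4 * i ^ 2 * t * Real.cot t)
    (h2 : T = 2 * t / (t + pit + Real.sqrt ((t + pit) ^ 2 + (r - rhat) / i ^ 2))) :
    rhat = 2 * i ^ 2 * Real.cot t *
      (t - Real.cot t + pit + Real.sqrt ((t - Real.cot t + pit) ^ 2 + r / i ^ 2)) := by
  obtain ⟨ht0, ht2⟩ := ht
  obtain ⟨hrhat0, hrhatr⟩ := hrhat
  set c := Real.cot t with hc
  have hcnonneg : 0 ≤ c := by
    rw [hc, Real.cot_eq_cos_div_sin]
    apply div_nonneg
    · exact Real.cos_nonneg_of_mem_Icc ⟨by linarith [Real.pi_pos], ht2⟩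
    · exact (Real.sin_pos_of_pos_of_lt_pi ht0 (by linarith [Real.pi_pos])).le
  set s := Real.sqrt ((t + pit) ^ 2 + (r - rhat) / i ^ 2) with hs
  have hsnonneg : 0 ≤ s := Real.sqrt_nonneg _
  have hi2 : (0:ℝ) < i ^ 2 := by positivity
  have hargnonneg : 0 ≤ (t + pit) ^ 2 + (r - rhat) / i ^ 2 := by
    have : 0 ≤ (r - rhat) / i ^ 2 := div_nonneg (by linarith) hi2.le
    positivity
  have hs2 : s ^ 2 = (t + pit) ^ 2 + (r - rhat) / i ^ 2 := Real.sq_sqrt hargnonneg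
  have hden : 0 < t + pit + s := by linarith
  -- rhat = 2 i² c (t + pit + s)
  have key : rhat = 2 * i ^ 2 * c * (t + pit + s) := by
    rw [h2] at h1
    field_simp at h1
    have h1' : 2 * t * rhat = 2 * t * (2 * i ^ 2 * c * (t + pit + s)) := by
      linear_combination t * h1
    have ht0' : (2 : ℝ) * t ≠ 0 := by positivity
    exact mul_left_cancel₀ ht0' h1'
  have hS : Real.sqrt ((t - c + pit) ^ 2 + r / i ^ 2) = s + c := by
    have heq : (t - c + pit) ^ 2 + r / i ^ 2 = (s + c) ^ 2 := by
      have hrhati : rhat / i ^ 2 = 2 * c * (t + pit + s) := by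
        rw [key]; field_simp
      have : r / i ^ 2 = (r - rhat) / i ^ 2 + rhat / i ^ 2 := by ring
      rw [this, hrhati]
      nlinarith [hs2]
    rw [heq, Real.sqrt_sq (by linarith)]
  rw [hS, key]
  ring
end

section
/- Let u ∈ (0, 0.36) and set v = uπ/(u - π/2 + √((u + π/2)² + 3.6)). Then F(u,v) = 4v²(u+v) - 2v²·sin(2v) - uπ²·sin²v satisfies F(u,v) < 0. -/
open Real

/-- Lower bound `sin x > x - 3x³/16` for `0 < x < 2`, via the half-angle formula. -/
lemma sin_lb {x : ℝ} (hx : 0 < x) (hx2 : x < 2) : x - 3 * x ^ 3 / 16 < Real.sin x := by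
  have h1 : (0:ℝ) < x / 2 := by linarith
  have h2 : x / 2 ≤ 1 := by linarith
  have hs : x / 2 - (x / 2) ^ 3 / 4 < Real.sin (x / 2) := by
    have := Real.sin_gt_sub_cube h1
    have h3 : 0 < (x / 2) ^ 3 := by positivity
    linarith
  have hc : 1 - (x / 2) ^ 2 / 2 ≤ Real.cos (x / 2) := Real.one_sub_sq_div_two_le_cos
  have hsp : (0:ℝ) < x / 2 - (x / 2) ^ 3 / 4 := by nlinarith
  have hcp : (0:ℝ) < 1 - (x / 2) ^ 2 / 2 := by nlinarith
  have h2m : Real.sin x = 2 * Real.sin (x / 2) * Real.cos (x / 2) := by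
    have := Real.sin_two_mul (x / 2)
    rw [show 2 * (x / 2) = x by ring] at this
    linarith
  have hprod : (x / 2 - (x / 2) ^ 3 / 4) * (1 - (x / 2) ^ 2 / 2) ≤
      Real.sin (x / 2) * Real.cos (x / 2) :=
    mul_le_mul hs.le hc hcp.le (by linarith)
  nlinarith [hprod, pow_nonneg hx.le 5]

/-- Positivity of the auxiliary quartic. -/
lemma g_pos {v : ℝ} (h0 : 0 < v) (h1 : v < 0.76) :
    0 < 3.6 * (5.8696 - 3.701104 * v ^ 2) ^ 2 -
      (9.86961 - 6.283184 * v) * 2.75 * v ^ 2 * (2.75 * v ^ 2 + (5.86961 - 3.7011 * v ^ 2)) := by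
  nlinarith [h0.le, h1.le, sq_nonneg v, mul_pos h0 h0, sq_nonneg (v - 0.76),
    mul_nonneg (mul_nonneg h0.le h0.le) h0.le, sq_nonneg (v * (v - 0.76)),
    mul_nonneg (mul_nonneg (mul_nonneg h0.le h0.le) h0.le) h0.le]

set_option maxHeartbeats 1000000 in
theorem F_neg_on_curve (u : ℝ) (hu : u ∈ Set.Ioo (0 : ℝ) 0.36) :
    let v := u * π / (u - π / 2 + Real.sqrt ((u + π / 2) ^ 2 + 3.6))
    4 * v ^ 2 * (u + v) - 2 * v ^ 2 * Real.sin (2 * v) - u * π ^ 2 * Real.sin v ^ 2 < 0 := by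
  obtain ⟨hu0, hu1⟩ := hu
  have hu1 : u < 0.36 := hu1
  have hpi1 : (3.141592 : ℝ) < π := Real.pi_gt_d6
  have hpi2 : π < 3.141593 := Real.pi_lt_d6
  have hpisq1 : (9.8696 : ℝ) < π ^ 2 := by nlinarith
  have hpisq2 : π ^ 2 < 9.86961 := by nlinarith
  intro v
  have hv : v = u * π / (u - π / 2 + Real.sqrt ((u + π / 2) ^ 2 + 3.6)) := rfl
  clear_value v
  obtain ⟨s, hs_def⟩ : ∃ s, s = Real.sqrt ((u + π / 2) ^ 2 + 3.6) := ⟨_, rfl⟩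
  rw [← hs_def] at hv
  have hs_nonneg : 0 ≤ s := hs_def ▸ Real.sqrt_nonneg _
  have hs2 : s ^ 2 = (u + π / 2) ^ 2 + 3.6 := by
    rw [hs_def, Real.sq_sqrt]; positivity
  clear hs_def
  have hs_gt : 3.134 * u + π / 2 < s := by
    nlinarith [sq_nonneg (s - (3.134 * u + π / 2)), sq_nonneg (s + (3.134 * u + π / 2))]
  have hden : 0 < u - π / 2 + s := by nlinarith
  have hm : v * (u - π / 2 + s) = u * π := by
    rw [hv, div_mul_cancel₀ _ hden.ne']
  have hv0 : 0 < v := by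
    rw [hv]; positivity
  have hv1 : v < 0.76 := by
    rw [hv, div_lt_iff₀ hden]
    nlinarith
  have hvsq : v ^ 2 < 0.5776 := by nlinarith
  -- the defining quadratic relation
  have hquad : u * π * (π - 2 * v) * (u + v) = 3.6 * v ^ 2 := by
    linear_combination (-(u * π - v * (u - π / 2) + v * s)) * hm + v ^ 2 * hs2
  clear hm hs2 hs_gt hden hs_nonneg hv

  clear s
  -- abbreviations
  obtain ⟨D, hD_def⟩ : ∃ D : ℝ, D = π ^ 2 - 4 - 3 / 8 * π ^ 2 * v ^ 2 := ⟨_, rfl⟩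
  obtain ⟨M, hM_def⟩ : ∃ M : ℝ, M = 11 / 4 * v ^ 3 := ⟨_, rfl⟩
  have hpiv2 : π ^ 2 * v ^ 2 < 9.86961 * v ^ 2 :=
    mul_lt_mul_of_pos_right hpisq2 (pow_pos hv0 2)
  have hDl : 5.8696 - 3.701104 * v ^ 2 < D := by
    rw [hD_def]; nlinarith [sq_nonneg v]
  have hDu : D < 5.86961 - 3.7011 * v ^ 2 := by
    rw [hD_def]; nlinarith [sq_nonneg v]
  have hDlpos : (0:ℝ) < 5.8696 - 3.701104 * v ^ 2 := by nlinarith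
  have hD : 0 < D := by linarith
  have hpv : 0 < π - 2 * v := by nlinarith
  have hPu : π * (π - 2 * v) < 9.86961 - 6.283184 * v := by nlinarith
  have hPpos : 0 < π * (π - 2 * v) := by positivity
  -- positivity of the u-free part
  have hQ : 0 < 3.6 * v ^ 2 * D ^ 2 - π * (π - 2 * v) * M * (M + v * D) := by
    have hMpos : 0 < M := by rw [hM_def]; positivity
    have hMvD : 0 < M + v * D := by positivity
    have hMvDu : M + v * D ≤ v * (2.75 * v ^ 2 + (5.86961 - 3.7011 * v ^ 2)) := by
      rw [hM_def]
      nlinarith [mul_lt_mul_of_pos_left hDu hv0]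
    have hstep1 : π * (π - 2 * v) * M * (M + v * D) ≤
        (9.86961 - 6.283184 * v) * M * (M + v * D) := by
      have h := mul_le_mul_of_nonneg_right hPu.le (mul_pos hMpos hMvD).le
      linarith [h]
    have h96 : (0:ℝ) < 9.86961 - 6.283184 * v := by nlinarith
    have hstep2 : (9.86961 - 6.283184 * v) * M * (M + v * D) ≤
        (9.86961 - 6.283184 * v) * M * (v * (2.75 * v ^ 2 + (5.86961 - 3.7011 * v ^ 2))) := by
      have h := mul_le_mul_of_nonneg_left hMvDu (mul_pos h96 hMpos).le
      linarith [h]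
    have hD2 : (5.8696 - 3.701104 * v ^ 2) ^ 2 < D ^ 2 :=
      pow_lt_pow_left₀ hDl hDlpos.le (by norm_num)
    have hg := g_pos hv0 hv1
    have hMeq : (9.86961 - 6.283184 * v) * M * (v * (2.75 * v ^ 2 + (5.86961 - 3.7011 * v ^ 2)))
        = v ^ 2 * ((9.86961 - 6.283184 * v) * 2.75 * v ^ 2 * (2.75 * v ^ 2 + (5.86961 - 3.7011 * v ^ 2))) := by
      rw [hM_def]; ring
    have hA := mul_lt_mul_of_pos_left hD2 (by positivity : (0:ℝ) < 3.6 * v ^ 2)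
    have hB := mul_pos (pow_pos hv0 2) hg
    linarith [hstep1, hstep2, hMeq, hA, hB]
  -- key identity and resulting bound  uD > M
  have hid : (u * D - M) * (π * (π - 2 * v) * (u * D + M + v * D)) =
      3.6 * v ^ 2 * D ^ 2 - π * (π - 2 * v) * M * (M + v * D) := by
    rw [hD_def, hM_def]
    linear_combination ((π ^ 2 - 4 - 3 / 8 * π ^ 2 * v ^ 2) ^ 2) * hquad
  have hBpos : 0 < π * (π - 2 * v) * (u * D + M + v * D) := by
    have h1 : 0 < u * D := mul_pos hu0 hD
    have h2 : 0 < M := by rw [hM_def]; positivity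
    have h3 : 0 < v * D := mul_pos hv0 hD
    have h4 : 0 < u * D + M + v * D := by linarith
    exact mul_pos hPpos h4
  have hT : 0 < u * D - M := by
    have hprod : 0 < (u * D - M) * (π * (π - 2 * v) * (u * D + M + v * D)) := by
      rw [hid]; exact hQ
    rcases mul_pos_iff.mp hprod with ⟨h, _⟩ | ⟨_, h⟩
    · exact h
    · linarith
  -- polynomial key inequality
  have key : 4 * v ^ 2 * (u + v) - 2 * v ^ 2 * (2 * (v - 3 * v ^ 3 / 16) * (1 - v ^ 2 / 2))
      - u * π ^ 2 * (v - 3 * v ^ 3 / 16) ^ 2 < 0 := by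
    have hexp : 4 * v ^ 2 * (u + v) - 2 * v ^ 2 * (2 * (v - 3 * v ^ 3 / 16) * (1 - v ^ 2 / 2))
        - u * π ^ 2 * (v - 3 * v ^ 3 / 16) ^ 2
        = -(v ^ 2 * (u * D - M)) - 3 / 8 * v ^ 7 - 9 / 256 * u * π ^ 2 * v ^ 6 := by
      rw [hD_def, hM_def]; ring
    rw [hexp]
    have h1 : 0 < v ^ 2 * (u * D - M) := mul_pos (by positivity) hT
    have h2 : 0 < 3 / 8 * v ^ 7 := by positivity
    have h3 : 0 < 9 / 256 * u * π ^ 2 * v ^ 6 := by positivity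
    linarith
  -- sin bounds
  have hl : v - 3 * v ^ 3 / 16 < Real.sin v := sin_lb hv0 (by linarith)
  have hlp : 0 < v - 3 * v ^ 3 / 16 := by nlinarith [hvsq, hv0]
  have hcos : 1 - v ^ 2 / 2 ≤ Real.cos v := Real.one_sub_sq_div_two_le_cos
  have hcp : (0:ℝ) < 1 - v ^ 2 / 2 := by nlinarith [hvsq]
  have hsinpos : 0 < Real.sin v := lt_trans hlp hl
  have hs2v : 2 * (v - 3 * v ^ 3 / 16) * (1 - v ^ 2 / 2) < Real.sin (2 * v) := by
    rw [Real.sin_two_mul]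
    have hprod : (v - 3 * v ^ 3 / 16) * (1 - v ^ 2 / 2) < Real.sin v * Real.cos v :=
      mul_lt_mul hl hcos hcp hsinpos.le
    linarith
  have h1 : 2 * v ^ 2 * (2 * (v - 3 * v ^ 3 / 16) * (1 - v ^ 2 / 2)) ≤ 2 * v ^ 2 * Real.sin (2 * v) := by
    have h := mul_le_mul_of_nonneg_left hs2v.le (by positivity : (0:ℝ) ≤ 2 * v ^ 2)
    linarith [h]
  have h2 : u * π ^ 2 * (v - 3 * v ^ 3 / 16) ^ 2 ≤ u * π ^ 2 * Real.sin v ^ 2 := by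
    have hsq : (v - 3 * v ^ 3 / 16) ^ 2 ≤ Real.sin v ^ 2 :=
      pow_le_pow_left₀ hlp.le hl.le 2
    have h := mul_le_mul_of_nonneg_left hsq (by positivity : (0:ℝ) ≤ u * π ^ 2)
    linarith [h]
  linarith [key, h1, h2]
end
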